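/- Let E be a phase observable and suppose ‖E(X₀)‖ < 1 for some Borel set X₀ with E(X₀) ≠ O. Then for the complement X₀' one has E(X₀') ≥ (1 − ‖E(X₀)‖)·I > 0, so E(X₀') is invertible with range the whole Hilbert space; consequently, for every one-dimensional projection P, the infimum P ∧ E(X₀') (the largest effect below both) is nonzero. Hence N and E are not complementary. -/

import Mathlib

open MeasureTheory Complex

/-- `phaseInt X n m = (1/2π) ∫_X e^{i(n-m)x} dx`. -/
noncomputable def phaseInt (X : Set ℝ) (n m : ℕ) : ℂ :=
  ((1 / (2 * Real.pi) : ℝ) : ℂ) *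
    ∫ x in X, Complex.exp (Complex.I * ((n : ℂ) - (m : ℂ)) * (x : ℂ))

/-- If a phase observable has an effect `E(X₀) ≠ O` with `‖E(X₀)‖ < 1`, then the complement
effect satisfies `E(X₀') ≥ (1-‖E(X₀)‖)·I`, is surjective, and for every one-dimensional
projection `P = |φ⟩⟨φ|` there is a nonzero effect below both `P` and `E(X₀')`
(so `P ∧ E(X₀') ≠ O`); hence number and `E` are not complementary. -/
theorem stmt19 {H : Type*} [NormedAddCommGroup H] [InnerProductSpace ℂ H] [CompleteSpace H]
    (e : HilbertBasis ℕ ℂ H) (ξ : ℕ → H) (hξ : ∀ n, ‖ξ n‖ = 1)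
    (c : ℕ → ℕ → ℂ) (hc : ∀ n m, c n m = (inner ℂ (ξ n) (ξ m) : ℂ))
    (E : Set ℝ → (H →L[ℂ] H))
    (hE : ∀ X : Set ℝ, MeasurableSet X → X ⊆ Set.Ico 0 (2 * Real.pi) → ∀ n m : ℕ,
      (inner ℂ (e n) (E X (e m)) : ℂ) = c n m * phaseInt X n m)
    (hposE : ∀ X : Set ℝ, MeasurableSet X → X ⊆ Set.Ico 0 (2 * Real.pi) →
      (E X).IsPositive ∧ ((1 : H →L[ℂ] H) - E X).IsPositive)
    (X₀ : Set ℝ) (hX₀m : MeasurableSet X₀) (hX₀s : X₀ ⊆ Set.Ico 0 (2 * Real.pi))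
    (hne : E X₀ ≠ 0) (hnorm : ‖E X₀‖ < 1)
    (hadd : E X₀ + E (Set.Ico 0 (2 * Real.pi) \ X₀) = 1) :
    (∀ φ : H, (1 - ‖E X₀‖) * ‖φ‖ ^ 2 ≤
      (inner ℂ φ (E (Set.Ico 0 (2 * Real.pi) \ X₀) φ) : ℂ).re) ∧
    Function.Surjective (E (Set.Ico 0 (2 * Real.pi) \ X₀)) ∧
    (∀ φ : H, ‖φ‖ = 1 → ∃ A : H →L[ℂ] H, A ≠ 0 ∧ A.IsPositive ∧
      ((innerSL ℂ φ).smulRight φ - A).IsPositive ∧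
      (E (Set.Ico 0 (2 * Real.pi) \ X₀) - A).IsPositive) := by
  classical
  set T := E (Set.Ico 0 (2 * Real.pi) \ X₀) with hT
  set κ : ℝ := 1 - ‖E X₀‖ with hκ
  have hκpos : 0 < κ := by rw [hκ]; linarith
  have hκle : κ ≤ 1 := by
    rw [hκ]; linarith [norm_nonneg (E X₀)]
  -- T applied
  have hTφ : ∀ φ : H, T φ = φ - E X₀ φ := by
    intro φ
    have := congrArg (fun S : H →L[ℂ] H => S φ) hadd
    simp only [ContinuousLinearMap.add_apply, ContinuousLinearMap.one_apply] at this
    exact eq_sub_of_add_eq' this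
  -- coercivity
  have hcoer : ∀ φ : H, κ * ‖φ‖ ^ 2 ≤ (inner ℂ φ (T φ) : ℂ).re := by
    intro φ
    have h1 : (inner ℂ φ (E X₀ φ) : ℂ).re ≤ ‖E X₀‖ * ‖φ‖ ^ 2 := by
      calc (inner ℂ φ (E X₀ φ) : ℂ).re ≤ ‖(inner ℂ φ (E X₀ φ) : ℂ)‖ := Complex.re_le_norm _
        _ ≤ ‖φ‖ * ‖E X₀ φ‖ := norm_inner_le_norm _ _
        _ ≤ ‖φ‖ * (‖E X₀‖ * ‖φ‖) := by
            gcongr; exact (E X₀).le_opNorm φ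
        _ = ‖E X₀‖ * ‖φ‖ ^ 2 := by ring
    have h2 : (inner ℂ φ (T φ) : ℂ) = (inner ℂ φ φ : ℂ) - inner ℂ φ (E X₀ φ) := by
      rw [hTφ φ, inner_sub_right]
    have h3 : (inner ℂ φ φ : ℂ).re = ‖φ‖ ^ 2 := by
      simpa using inner_self_eq_norm_sq (𝕜 := ℂ) φ
    rw [h2, Complex.sub_re, h3, hκ]
    nlinarith
  refine ⟨hcoer, ?_, ?_⟩
  · -- surjectivity
    have hbound : ∀ φ : H, ‖φ‖ ≤ κ⁻¹ * ‖T φ‖ := by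
      intro φ
      rcases eq_or_ne φ 0 with rfl | hφ
      · simp
      have hn : 0 < ‖φ‖ := norm_pos_iff.mpr hφ
      have : κ * ‖φ‖ ^ 2 ≤ ‖φ‖ * ‖T φ‖ := by
        calc κ * ‖φ‖ ^ 2 ≤ (inner ℂ φ (T φ) : ℂ).re := hcoer φ
          _ ≤ ‖(inner ℂ φ (T φ) : ℂ)‖ := Complex.re_le_norm _
          _ ≤ ‖φ‖ * ‖T φ‖ := norm_inner_le_norm _ _
      rw [le_inv_mul_iff₀ hκpos]
      nlinarith
    have hanti : AntilipschitzWith ⟨κ⁻¹, by positivity⟩ T :=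
      AddMonoidHomClass.antilipschitz_of_bound T hbound
    have hclosed : IsClosed (Set.range T) := hanti.isClosed_range T.uniformContinuous
    have hclosed' : IsClosed ((LinearMap.range (T : H →ₗ[ℂ] H) : Submodule ℂ H) : Set H) := by
      simpa [LinearMap.coe_range] using hclosed
    haveI : CompleteSpace (LinearMap.range (T : H →ₗ[ℂ] H) : Submodule ℂ H) :=
      hclosed'.completeSpace_coe
    have horth : (LinearMap.range (T : H →ₗ[ℂ] H) : Submodule ℂ H)ᗮ = ⊥ := by
      rw [Submodule.eq_bot_iff]
      intro v hv
      have h0 : (inner ℂ v (T v) : ℂ) = 0 := by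
        have := (Submodule.mem_orthogonal _ v).mp hv (T v) (LinearMap.mem_range_self _ v)
        simpa [inner_eq_zero_symm] using this
      have := hcoer v
      rw [h0] at this
      simp at this
      have hv0 : ‖v‖ ^ 2 ≤ 0 := by nlinarith
      have : ‖v‖ = 0 := by nlinarith [sq_nonneg ‖v‖, norm_nonneg v]
      simpa using this
    have htop : (LinearMap.range (T : H →ₗ[ℂ] H) : Submodule ℂ H) = ⊤ :=
      Submodule.orthogonal_eq_bot_iff.mp horth
    exact LinearMap.range_eq_top.mp htop
  · -- the nonzero effect below P and T
    intro φ hφ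
    set P : H →L[ℂ] H := (innerSL ℂ φ).smulRight φ with hP
    have hPapp : ∀ ψ : H, P ψ = (inner ℂ φ ψ : ℂ) • φ := fun ψ => rfl
    have hκsa : IsSelfAdjoint ((κ:ℂ)) := by
      rw [isSelfAdjoint_iff, Complex.star_def, Complex.conj_ofReal]
    have h1κsa : IsSelfAdjoint (((1 - κ : ℝ):ℂ)) := by
      rw [isSelfAdjoint_iff, Complex.star_def, Complex.conj_ofReal]
    have hPsym : IsSelfAdjoint P := by
      rw [ContinuousLinearMap.isSelfAdjoint_iff_isSymmetric]
      intro x y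
      simp only [ContinuousLinearMap.coe_coe, hPapp, inner_smul_left, inner_smul_right]
      rw [inner_conj_symm]; ring
    have hPpos : ∀ ψ : H, (inner ℂ (P ψ) ψ : ℂ).re = ‖(inner ℂ φ ψ : ℂ)‖ ^ 2 := by
      intro ψ
      rw [hPapp ψ, inner_smul_left, mul_comm, Complex.mul_conj]
      simp [Complex.normSq_eq_norm_sq, ← Complex.ofReal_pow]
    refine ⟨(κ : ℂ) • P, ?_, ?_, ?_, ?_⟩
    · intro h
      have h1 : ((κ : ℂ) • P) φ = (κ : ℂ) • φ := by
        simp only [ContinuousLinearMap.smul_apply, hPapp]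
        rw [inner_self_eq_norm_sq_to_K, hφ]
        simp
      have h2 : ((κ : ℂ) • P) φ = 0 := by rw [h]; rfl
      rw [h1] at h2
      have hφ0 : φ ≠ 0 := by
        intro h0; rw [h0, norm_zero] at hφ; linarith
      have hκ0 : (κ : ℂ) ≠ 0 := by exact_mod_cast hκpos.ne'
      exact hφ0 ((smul_eq_zero.mp h2).resolve_left hκ0)
    · refine ⟨?_, ?_⟩
      · exact (hκsa.smul hPsym).isSymmetric
      · intro ψ
        rw [ContinuousLinearMap.reApplyInnerSelf]
        simp only [ContinuousLinearMap.smul_apply, inner_smul_left,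
          Complex.conj_ofReal, RCLike.re_to_complex, Complex.mul_re,
          Complex.ofReal_re, Complex.ofReal_im, zero_mul, sub_zero]
        rw [hPpos]
        positivity
    · have heq : P - (κ : ℂ) • P = ((1 - κ : ℝ) : ℂ) • P := by
        have hcast : ((1 - κ : ℝ) : ℂ) = 1 - (κ : ℂ) := by push_cast; ring
        rw [hcast, sub_smul, one_smul]
      rw [heq]
      refine ⟨(h1κsa.smul hPsym).isSymmetric, ?_⟩
      intro ψ
      rw [ContinuousLinearMap.reApplyInnerSelf]
      simp only [ContinuousLinearMap.smul_apply, inner_smul_left,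
        Complex.conj_ofReal, RCLike.re_to_complex, Complex.mul_re,
        Complex.ofReal_re, Complex.ofReal_im, zero_mul, sub_zero]
      rw [hPpos]
      have h0 : (0:ℝ) ≤ 1 - κ := by linarith
      positivity
    · have hTm : MeasurableSet (Set.Ico 0 (2 * Real.pi) \ X₀) :=
        measurableSet_Ico.diff hX₀m
      have hTs : Set.Ico 0 (2 * Real.pi) \ X₀ ⊆ Set.Ico 0 (2 * Real.pi) := Set.diff_subset
      have hTpos := (hposE _ hTm hTs).1
      refine ⟨(hTpos.isSelfAdjoint.sub (hκsa.smul hPsym)).isSymmetric, ?_⟩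
      intro ψ
      rw [ContinuousLinearMap.reApplyInnerSelf]
      simp only [ContinuousLinearMap.sub_apply, ContinuousLinearMap.smul_apply,
        inner_sub_left, inner_smul_left, Complex.conj_ofReal, RCLike.re_to_complex,
        Complex.sub_re, Complex.mul_re, Complex.ofReal_re, Complex.ofReal_im,
        zero_mul, sub_zero]
      rw [hPpos]
      have h2 : κ * ‖ψ‖ ^ 2 ≤ (inner ℂ (T ψ) ψ : ℂ).re := by
        rw [← inner_conj_symm, Complex.conj_re]; exact hcoer ψ
      have h3 : ‖(inner ℂ φ ψ : ℂ)‖ ≤ ‖ψ‖ := by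
        calc ‖(inner ℂ φ ψ : ℂ)‖ ≤ ‖φ‖ * ‖ψ‖ := norm_inner_le_norm _ _
          _ = ‖ψ‖ := by rw [hφ, one_mul]
      have h4 : ‖(inner ℂ φ ψ : ℂ)‖ ^ 2 ≤ ‖ψ‖ ^ 2 := by
        nlinarith [norm_nonneg (inner ℂ φ ψ : ℂ)]
      nlinarith [mul_le_mul_of_nonneg_left h4 hκpos.le]
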